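/- Fix 0 ∈ I, a constant θ₀, and set θ(s) = ∫₀ˢ τ(u)du + θ₀, κ̄(s) = κ(s)cos θ(s), τ̄(s) = κ(s)sin θ(s). If there exist constants (λ, μ) ≠ (0, 0) such that λκ̄(s) + μτ̄(s) = 1 for all s ∈ I, then there exists a constant φ₀ such that 1/κ(s) = √(λ² + μ²)·cos(∫₀ˢ τ(u)du + φ₀) for all s ∈ I; in particular γ satisfies the spherical-curve curvature relation with A = √(λ² + μ²). -/

import Mathlib

open scoped RealInnerProductSpace

noncomputable def cross3 (x y : EuclideanSpace ℝ (Fin 3)) : EuclideanSpace ℝ (Fin 3) :=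
  WithLp.toLp 2 ![x 1 * y 2 - x 2 * y 1, x 2 * y 0 - x 0 * y 2, x 0 * y 1 - x 1 * y 0]

/-- With θ(s) = ∫₀ˢ τ + θ₀, κ̄ = κ cos θ, τ̄ = κ sin θ: if there are
constants (λ, μ) ≠ (0,0) with λκ̄ + μτ̄ = 1 on I, then there is a constant φ₀ with
1/κ = √(λ² + μ²)·cos(∫₀ˢ τ + φ₀) on I. -/
theorem stmt_11 (a b : ℝ) (γ T N B : ℝ → EuclideanSpace ℝ (Fin 3)) (κ τ : ℝ → ℝ)
    (hγT : ∀ s ∈ Set.Ioo a b, HasDerivAt γ (T s) s)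
    (hT1 : ∀ s ∈ Set.Ioo a b, ‖T s‖ = 1)
    (hN1 : ∀ s ∈ Set.Ioo a b, ‖N s‖ = 1)
    (hB1 : ∀ s ∈ Set.Ioo a b, ‖B s‖ = 1)
    (hTN : ∀ s ∈ Set.Ioo a b, ⟪T s, N s⟫ = 0)
    (hTB : ∀ s ∈ Set.Ioo a b, ⟪T s, B s⟫ = 0)
    (hNB : ∀ s ∈ Set.Ioo a b, ⟪N s, B s⟫ = 0)
    (horient : ∀ s ∈ Set.Ioo a b, B s = cross3 (T s) (N s))
    (hκpos : ∀ s ∈ Set.Ioo a b, 0 < κ s)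
    (hTder : ∀ s ∈ Set.Ioo a b, HasDerivAt T (κ s • N s) s)
    (hNder : ∀ s ∈ Set.Ioo a b, HasDerivAt N ((-κ s) • T s + τ s • B s) s)
    (hBder : ∀ s ∈ Set.Ioo a b, HasDerivAt B ((-τ s) • N s) s)
    (h0 : (0:ℝ) ∈ Set.Ioo a b) (hτcont : ContinuousOn τ (Set.Ioo a b))
    (θ₀ : ℝ) :
    ∀ lam μ : ℝ, ¬(lam = 0 ∧ μ = 0) →
      (∀ s ∈ Set.Ioo a b,
        lam * (κ s * Real.cos ((∫ t in (0:ℝ)..s, τ t) + θ₀)) +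
          μ * (κ s * Real.sin ((∫ t in (0:ℝ)..s, τ t) + θ₀)) = 1) →
      ∃ φ₀ : ℝ, ∀ s ∈ Set.Ioo a b,
        1 / κ s = Real.sqrt (lam ^ 2 + μ ^ 2) *
          Real.cos ((∫ t in (0:ℝ)..s, τ t) + φ₀) := by
  intro lam μ hne h
  set z : ℂ := ⟨lam, μ⟩ with hz
  set R := Real.sqrt (lam ^ 2 + μ ^ 2) with hR
  have habs : ‖z‖ = R := by
    simp [Complex.norm_def, Complex.normSq_apply, hz, hR, sq]
  have hlam : lam = R * Real.cos z.arg := by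
    rw [← habs, Complex.norm_mul_cos_arg]
  have hμ : μ = R * Real.sin z.arg := by
    rw [← habs, Complex.norm_mul_sin_arg]
  refine ⟨θ₀ - z.arg, fun s hs => ?_⟩
  have hκ := (hκpos s hs).ne'
  have h1 := h s hs
  set α := (∫ t in (0:ℝ)..s, τ t) with hα
  have : 1 / κ s = lam * Real.cos (α + θ₀) + μ * Real.sin (α + θ₀) := by
    field_simp
    linarith [h1]
  rw [this, hlam, hμ]
  have : α + (θ₀ - z.arg) = (α + θ₀) - z.arg := by ring
  rw [this, Real.cos_sub]
  ring
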